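/- Let γ, λ > 0 with γλ ≥ 1, let α > 1, and let a < t be integers with a ≥ 0. Then ∏_{j=a}^{t−1} (1 + γλ/(j + α)) ≤ (1 + (t − a)/(a − 1 + α))^{γλ}. -/

import Mathlib

/-- For `γ, λ > 0` with `γλ ≥ 1`, `α > 1`, and integers `0 ≤ a < t`,
`∏_{j=a}^{t−1} (1 + γλ/(j + α)) ≤ (1 + (t − a)/(a − 1 + α))^{γλ}`. -/
theorem stmt_10 (γ lam α : ℝ) (hγ : 0 < γ) (hlam : 0 < lam) (hγlam : 1 ≤ γ * lam)
    (hα : 1 < α) (a t : ℤ) (ha : 0 ≤ a) (hat : a < t) :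
    ∏ j ∈ Finset.Ico a t, (1 + γ * lam / ((j : ℝ) + α))
      ≤ (1 + ((t : ℝ) - a) / ((a : ℝ) - 1 + α)) ^ (γ * lam) := by
  have ha0 : (0:ℝ) ≤ (a:ℝ) := by exact_mod_cast ha
  have hpos : ∀ j ∈ Finset.Ico a t, (0:ℝ) < (j:ℝ) + α := by
    intro j hj
    have hj1 : a ≤ j := (Finset.mem_Ico.mp hj).1
    have : (a:ℝ) ≤ (j:ℝ) := by exact_mod_cast hj1
    linarith
  -- Bernoulli step
  have step : ∀ j ∈ Finset.Ico a t,
      1 + γ * lam / ((j:ℝ) + α) ≤ (1 + 1/((j:ℝ)+α)) ^ (γ * lam) := by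
    intro j hj
    have hj0 := hpos j hj
    have h1 : (-1:ℝ) ≤ 1/((j:ℝ)+α) := le_of_lt (lt_of_lt_of_le (by norm_num) (le_of_lt (one_div_pos.mpr hj0)))
    have := one_add_mul_self_le_rpow_one_add h1 hγlam
    calc 1 + γ * lam / ((j:ℝ) + α) = 1 + γ * lam * (1/((j:ℝ)+α)) := by ring
      _ ≤ (1 + 1/((j:ℝ)+α)) ^ (γ * lam) := this
  have h1 : ∏ j ∈ Finset.Ico a t, (1 + γ * lam / ((j : ℝ) + α))
      ≤ ∏ j ∈ Finset.Ico a t, (1 + 1/((j:ℝ)+α)) ^ (γ * lam) := by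
    apply Finset.prod_le_prod
    · intro j hj
      have hj0 := hpos j hj
      positivity
    · exact step
  have h2 : ∏ j ∈ Finset.Ico a t, (1 + 1/((j:ℝ)+α)) ^ (γ * lam)
      = (∏ j ∈ Finset.Ico a t, (1 + 1/((j:ℝ)+α))) ^ (γ * lam) := by
    apply Real.finset_prod_rpow
    intro j hj
    have hj0 := hpos j hj
    positivity
  -- Telescoping
  have tel : ∀ u : ℤ, a ≤ u → ∏ j ∈ Finset.Ico a u, (1 + 1/((j:ℝ)+α)) = ((u:ℝ)+α)/((a:ℝ)+α) := by
    refine fun u hu => Int.le_induction (motive := fun u _ => ∏ j ∈ Finset.Ico a u, (1 + 1/((j:ℝ)+α)) = ((u:ℝ)+α)/((a:ℝ)+α)) ?_ ?_ u hu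
    · simp only [Finset.Ico_self, Finset.prod_empty]
      rw [div_self (by linarith : ((a:ℝ)+α) ≠ 0)]
    · intro n hn ih
      have hn0 : (0:ℝ) < (n:ℝ) + α := by
        have : (a:ℝ) ≤ (n:ℝ) := by exact_mod_cast hn
        linarith
      have hins : Finset.Ico a (n+1) = insert n (Finset.Ico a n) := by
        ext x; simp only [Finset.mem_Ico, Finset.mem_insert]; omega
      rw [hins, Finset.prod_insert (by simp), ih]
      push_cast
      field_simp
      ring
  have htel := tel t (le_of_lt hat)
  rw [h2, htel] at h1
  refine le_trans h1 ?_
  apply Real.rpow_le_rpow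
  · have ht0 : (0:ℝ) < (t:ℝ) + α := by
      have : (a:ℝ) ≤ (t:ℝ) := by exact_mod_cast (le_of_lt hat)
      linarith
    positivity
  · have hat' : (a:ℝ) < (t:ℝ) := by exact_mod_cast hat
    have hd : ((a:ℝ) - 1 + α) ≠ 0 := by linarith
    have heq : (1:ℝ) + ((t:ℝ) - a) / ((a:ℝ) - 1 + α) = ((t:ℝ) - 1 + α)/((a:ℝ) - 1 + α) := by
      field_simp
      ring
    rw [heq, div_le_div_iff₀ (by linarith) (by linarith)]
    nlinarith
  · linarith
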